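/- If an undirected graph G on n vertices has more than n(k-2)/2 edges (k ≥ 2), then G contains a path on k vertices. -/

import Mathlib

open Finset List

namespace ErdosGallaiAux

variable {V : Type*}

/-- Build a walk from a nonempty chain of adjacent vertices. -/
lemma exists_walk_of_list (G : SimpleGraph V) :
    ∀ (l : List V), l.Chain' G.Adj → l ≠ [] →
      ∃ (x y : V) (p : G.Walk x y), p.support = l := by
  intro l
  induction l with
  | nil => simp
  | cons a t ih =>
    intro hc _
    match t, hc, ih with
    | [], _, _ => exact ⟨a, a, .nil, rfl⟩
    | b :: t2, hc, ih =>
      have hadj : G.Adj a b := (List.isChain_cons_cons.mp hc).1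
      obtain ⟨x, y, p, hp⟩ := ih hc.tail (by simp)
      have h1 : x :: p.support.tail = b :: t2 := by rw [← p.support_eq_cons, hp]
      injection h1 with hx _
      subst hx
      exact ⟨a, y, .cons hadj p, by simp [hp]⟩

variable {G : SimpleGraph V}

/-- Rotate a "cycle list" (a chain whose last element is adjacent to its head)
so that a given member `c` comes first. -/
lemma rotate_cycle {C : List V} (hC : C.Chain' G.Adj) (hne : C ≠ [])
    (hclose : G.Adj (C.getLast hne) (C.head hne)) {c : V} (hc : c ∈ C) :
    ∃ P : List V, P.Perm C ∧ P.Chain' G.Adj ∧ P.head? = some c := by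
  obtain ⟨X, Y, rfl⟩ := List.append_of_mem hc
  refine ⟨(c :: Y) ++ X, List.perm_append_comm, ?_, by cases Y <;> simp⟩
  rw [List.Chain', List.isChain_append]
  refine ⟨hC.suffix ⟨X, rfl⟩, hC.prefix ⟨c :: Y, rfl⟩, ?_⟩
  intro x hx y hy
  rcases eq_or_ne X [] with rfl | hX
  · simp at hy
  · have h1 : (X ++ c :: Y).getLast? = some x := by
      rw [List.getLast?_append_of_ne_nil _ (by simp)]
      exact Option.mem_def.mp hx
    have h2 : (X ++ c :: Y).head? = some y := by
      rcases X with _ | ⟨x0, X2⟩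
      · exact absurd rfl hX
      · simpa using Option.mem_def.mp hy
    have e1 : (X ++ c :: Y).getLast hne = x := by
      rw [List.getLast?_eq_getLast hne] at h1
      exact Option.some_injective _ h1
    have e2 : (X ++ c :: Y).head hne = y := by
      rw [List.head?_eq_head hne] at h2
      exact Option.some_injective _ h2
    exact e1 ▸ e2 ▸ hclose


/-- Pure arithmetic helper. -/
lemma arith1 (aK bK K D S S' E I : ℕ) (hb : bK = aK + K) (hsplit : D + E = S)
    (h2 : E ≤ S' + I) (h3 : I ≤ D) (hdv : 2 * D ≤ K) (hsum : bK < S) : aK < S' := by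
  omega

lemma arith2 (X Y Z SA SB SS : ℕ) (hs2 : Z = X + Y) (hsplit : SA + SB = SS)
    (hT : SB ≤ Y) (hsum : Z < SS) : X < SA := by
  omega

lemma main_lemma {V : Type*} [Fintype V] [DecidableEq V] {k : ℕ} (hk : 2 ≤ k)
    (G : SimpleGraph V) [DecidableRel G.Adj] :
    ∀ s : Finset V, s.card * (k - 2) < ∑ v ∈ s, (G.neighborFinset v ∩ s).card →
      ∃ l : List V, l.Chain' G.Adj ∧ l.Nodup ∧ l.length = k := by
  intro s
  induction s using Finset.strongInduction with
  | _ s IH =>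
    intro hsum
    by_cases hlow : ∃ v ∈ s, 2 * (G.neighborFinset v ∩ s).card ≤ k - 2
    · -- delete a low-degree vertex
      obtain ⟨v, hv, hdv⟩ := hlow
      apply IH (s.erase v) (Finset.erase_ssubset hv)
      have hsplit : (G.neighborFinset v ∩ s).card
            + ∑ u ∈ s.erase v, (G.neighborFinset u ∩ s).card
          = ∑ u ∈ s, (G.neighborFinset u ∩ s).card :=
        Finset.add_sum_erase s (fun u => (G.neighborFinset u ∩ s).card) hv
      have hkey : ∀ u ∈ s.erase v, (G.neighborFinset u ∩ s).card
          ≤ (G.neighborFinset u ∩ s.erase v).card + (if G.Adj u v then 1 else 0) := by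
        intro u _
        by_cases huv : G.Adj u v
        · have hvmem : v ∈ G.neighborFinset u := (G.mem_neighborFinset u v).mpr huv
          have heq : G.neighborFinset u ∩ s = insert v (G.neighborFinset u ∩ s.erase v) := by
            conv_lhs => rw [← Finset.insert_erase hv]
            rw [Finset.inter_comm, Finset.insert_inter_of_mem hvmem, Finset.inter_comm]
          rw [heq, if_pos huv]
          exact Finset.card_insert_le _ _
        · have heq : G.neighborFinset u ∩ s = G.neighborFinset u ∩ s.erase v := by
            ext x
            simp only [Finset.mem_inter, Finset.mem_erase, SimpleGraph.mem_neighborFinset]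
            constructor
            · rintro ⟨hx1, hx2⟩
              refine ⟨hx1, ?_, hx2⟩
              rintro rfl; exact huv hx1
            · rintro ⟨hx1, _, hx2⟩; exact ⟨hx1, hx2⟩
          rw [heq, if_neg huv]
          simp
      have h2 : ∑ u ∈ s.erase v, (G.neighborFinset u ∩ s).card
          ≤ ∑ u ∈ s.erase v, (G.neighborFinset u ∩ s.erase v).card
            + ∑ u ∈ s.erase v, (if G.Adj u v then 1 else 0) := by
        rw [← Finset.sum_add_distrib]
        exact Finset.sum_le_sum hkey
      have h3 : ∑ u ∈ s.erase v, (if G.Adj u v then 1 else 0)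
          ≤ (G.neighborFinset v ∩ s).card := by
        rw [← Finset.sum_filter_add_sum_filter_not (s.erase v) (fun u => G.Adj u v)]
        have e1 : ∑ u ∈ (s.erase v).filter (fun u => ¬ G.Adj u v),
            (if G.Adj u v then 1 else 0) = 0 := by
          apply Finset.sum_eq_zero
          intro u hu
          rw [if_neg (Finset.mem_filter.mp hu).2]
        have e2 : ∑ u ∈ (s.erase v).filter (fun u => G.Adj u v),
            (if G.Adj u v then 1 else 0) = ((s.erase v).filter (fun u => G.Adj u v)).card := by
          rw [Finset.card_eq_sum_ones]
          apply Finset.sum_congr rfl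
          intro u hu
          rw [if_pos (Finset.mem_filter.mp hu).2]
        rw [e1, e2, Nat.add_zero]
        apply Finset.card_le_card
        intro u hu
        obtain ⟨hu1, hu2⟩ := Finset.mem_filter.mp hu
        rw [Finset.mem_inter, SimpleGraph.mem_neighborFinset]
        exact ⟨hu2.symm, Finset.mem_of_mem_erase hu1⟩
      have hb : s.card * (k - 2) = (s.erase v).card * (k - 2) + (k - 2) := by
        rw [← Finset.card_erase_add_one hv]; ring
      exact arith1 _ _ _ _ _ _ _ _ hb hsplit h2 h3 hdv hsum
    · -- minimum degree is large
      push_neg at hlow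
      have hdeg : ∀ v ∈ s, k - 1 ≤ 2 * (G.neighborFinset v ∩ s).card := by
        intro v hv; have := hlow v hv; omega
      have hsne : s.Nonempty := by
        by_contra hne
        rw [Finset.not_nonempty_iff_eq_empty] at hne
        subst hne; simp at hsum
      obtain ⟨v0, hv0⟩ := hsne
      set Good : List V → Prop :=
        fun l => l ≠ [] ∧ l.Chain' G.Adj ∧ l.Nodup ∧ ∀ x ∈ l, x ∈ s with hGoodDef
      have hbound : ∀ l, Good l → l.length ≤ s.card := by
        rintro l ⟨-, -, hnd, hsub⟩
        rw [← List.toFinset_card_of_nodup hnd]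
        exact Finset.card_le_card (fun x hx => hsub x (List.mem_toFinset.mp hx))
      have hone : Good [v0] := ⟨by simp, List.IsChain.singleton _, by simp, by simpa using hv0⟩
      have hTne : {m | ∃ l, Good l ∧ l.length = m}.Nonempty := ⟨1, [v0], hone, rfl⟩
      have hTbdd : BddAbove {m | ∃ l, Good l ∧ l.length = m} :=
        ⟨s.card, by rintro m ⟨l, hl, rfl⟩; exact hbound l hl⟩
      obtain ⟨l, hGl, hllen⟩ := Nat.sSup_mem hTne hTbdd
      have hmax : ∀ l', Good l' → l'.length ≤ l.length := by
        intro l' hl'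
        rw [hllen]
        exact le_csSup hTbdd ⟨l', hl', rfl⟩
      obtain ⟨hlne, hlch, hlnd, hlsub⟩ := hGl
      by_cases hklen : k ≤ l.length
      · -- the maximal path is already long enough: take a prefix
        refine ⟨l.take k, hlch.prefix (List.take_prefix k l), ?_, ?_⟩
        · exact hlnd.sublist (List.take_sublist k l)
        · rw [List.length_take]; omega
      · -- rotation argument
        have hlen : l.length ≤ k - 1 := by omega
        have hlpos : 1 ≤ l.length := List.length_pos_iff.mpr hlne
        set a : V := l.head hlne with haDef
        set b : V := l.getLast hlne with hbDef
        have ha : a ∈ s := hlsub _ (List.head_mem hlne)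
        have hb : b ∈ s := hlsub _ (List.getLast_mem hlne)
        have hclosa : ∀ u, u ∈ s → G.Adj a u → u ∈ l := by
          intro u hus hadj
          by_contra hul
          have hGood' : Good (u :: l) := by
            refine ⟨by simp, ?_, by simp [hlnd, hul], ?_⟩
            · rw [List.Chain', List.isChain_cons]
              refine ⟨?_, hlch⟩
              intro y hy
              rw [List.head?_eq_head hlne] at hy
              obtain rfl : a = y := Option.mem_some_iff.mp hy
              exact hadj.symm
            · intro x hx
              rcases List.mem_cons.mp hx with rfl | hxl
              · exact hus
              · exact hlsub _ hxl
          have := hmax _ hGood'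
          simp at this
        have hclosb : ∀ u, u ∈ s → G.Adj b u → u ∈ l := by
          intro u hus hadj
          by_contra hul
          have hGood' : Good (l ++ [u]) := by
            refine ⟨by simp, ?_, ?_, ?_⟩
            · rw [List.Chain', List.isChain_append]
              refine ⟨hlch, by simp, ?_⟩
              intro x hx y hy
              rw [List.getLast?_eq_getLast hlne] at hx
              obtain rfl : b = x := Option.mem_some_iff.mp hx
              obtain rfl : u = y := by simpa using hy
              exact hadj
            · simp [List.nodup_append, hlnd, hul]
              rintro x hx rfl; exact hul hx
            · intro x hx
              rcases List.mem_append.mp hx with hxl | hxu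
              · exact hlsub _ hxl
              · obtain rfl : x = u := by simpa using hxu
                exact hus
          have := hmax _ hGood'
          simp at this
        set ℓ : ℕ := l.length - 1 with hℓDef
        set A : Finset ℕ := (Finset.range ℓ).filter (fun i => G.Adj a (l.getD (i+1) a)) with hADef
        set B : Finset ℕ := (Finset.range ℓ).filter (fun i => G.Adj b (l.getD i a)) with hBDef
        have hcardA : (G.neighborFinset a ∩ s).card ≤ A.card := by
          apply Finset.card_le_card_of_injOn (fun u => List.idxOf u l - 1)
          · intro u hu
            rw [Finset.mem_coe, Finset.mem_inter, SimpleGraph.mem_neighborFinset] at hu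
            obtain ⟨hau, hus⟩ := hu
            have hul : u ∈ l := hclosa u hus hau
            have hidx : List.idxOf u l < l.length := List.idxOf_lt_length_iff.mpr hul
            have hget : l[List.idxOf u l] = u := List.getElem_idxOf hidx
            have hne0 : List.idxOf u l ≠ 0 := by
              intro h0
              have h1 := hget
              simp only [h0] at h1
              have h2 : l[0] = a := by
                rw [haDef, List.getElem_zero (by omega)]
              exact G.ne_of_adj hau (h2.symm.trans h1)
            rw [hADef, Finset.mem_coe, Finset.mem_filter, Finset.mem_range]
            constructor
            · beta_reduce; omega
            · have hsucc : List.idxOf u l - 1 + 1 = List.idxOf u l := by omega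
              rw [hsucc, List.getD_eq_getElem l a hidx, hget]
              exact hau
          · intro u1 hu1 u2 hu2 hfe
            simp only [Finset.coe_inter, Set.mem_inter_iff, Finset.mem_coe,
              SimpleGraph.mem_neighborFinset] at hu1 hu2
            have hul1 : u1 ∈ l := hclosa u1 hu1.2 hu1.1
            have hul2 : u2 ∈ l := hclosa u2 hu2.2 hu2.1
            have hidx1 : List.idxOf u1 l < l.length := List.idxOf_lt_length_iff.mpr hul1
            have hidx2 : List.idxOf u2 l < l.length := List.idxOf_lt_length_iff.mpr hul2
            have hne01 : List.idxOf u1 l ≠ 0 := by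
              intro h0
              have h1 := List.getElem_idxOf hidx1
              simp only [h0] at h1
              have h2 : l[0] = a := by
                rw [haDef, List.getElem_zero (by omega)]
              exact G.ne_of_adj hu1.1 (h2.symm.trans h1)
            have hne02 : List.idxOf u2 l ≠ 0 := by
              intro h0
              have h1 := List.getElem_idxOf hidx2
              simp only [h0] at h1
              have h2 : l[0] = a := by
                rw [haDef, List.getElem_zero (by omega)]
              exact G.ne_of_adj hu2.1 (h2.symm.trans h1)
            have hidxeq : List.idxOf u1 l = List.idxOf u2 l := by
              simp only at hfe
              omega
            exact (List.idxOf_inj hul1).mp hidxeq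
        have hcardB : (G.neighborFinset b ∩ s).card ≤ B.card := by
          apply Finset.card_le_card_of_injOn (fun u => List.idxOf u l)
          · intro u hu
            rw [Finset.mem_coe, Finset.mem_inter, SimpleGraph.mem_neighborFinset] at hu
            obtain ⟨hbu, hus⟩ := hu
            have hul : u ∈ l := hclosb u hus hbu
            have hidx : List.idxOf u l < l.length := List.idxOf_lt_length_iff.mpr hul
            have hget : l[List.idxOf u l] = u := List.getElem_idxOf hidx
            have hnelast : List.idxOf u l ≠ l.length - 1 := by
              intro h0
              have h1 := hget
              simp only [h0] at h1
              have h2 : l[l.length - 1] = b := by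
                rw [hbDef, List.getLast_eq_getElem]
              exact G.ne_of_adj hbu (h2.symm.trans h1)
            rw [hBDef, Finset.mem_coe, Finset.mem_filter, Finset.mem_range]
            constructor
            · beta_reduce; omega
            · rw [List.getD_eq_getElem l a hidx, hget]
              exact hbu
          · intro u1 hu1 u2 hu2 hfe
            simp only [Finset.coe_inter, Set.mem_inter_iff, Finset.mem_coe,
              SimpleGraph.mem_neighborFinset] at hu1 hu2
            have hul1 : u1 ∈ l := hclosb u1 hu1.2 hu1.1
            have hul2 : u2 ∈ l := hclosb u2 hu2.2 hu2.1
            have hidx1 : List.idxOf u1 l < l.length := List.idxOf_lt_length_iff.mpr hul1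
            have hidx2 : List.idxOf u2 l < l.length := List.idxOf_lt_length_iff.mpr hul2
            exact (List.idxOf_inj hul1).mp hfe
        have hAB : ℓ < A.card + B.card := by
          have h1 := hdeg a ha
          have h2 := hdeg b hb
          omega
        have hint : (A ∩ B).Nonempty := by
          rw [← Finset.card_pos]
          have hsub : A ∪ B ⊆ Finset.range ℓ := by
            intro i hi
            rcases Finset.mem_union.mp hi with h | h
            · exact Finset.mem_of_mem_filter i h
            · exact Finset.mem_of_mem_filter i h
          have hc := Finset.card_union_add_card_inter A B
          have h2 : (A ∪ B).card ≤ ℓ := le_trans (Finset.card_le_card hsub) (by simp)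
          omega
        obtain ⟨i, hiAB⟩ := hint
        rw [Finset.mem_inter] at hiAB
        obtain ⟨hiA, hiB⟩ := hiAB
        rw [hADef, Finset.mem_filter, Finset.mem_range] at hiA
        rw [hBDef, Finset.mem_filter, Finset.mem_range] at hiB
        obtain ⟨hiℓ, hadjA⟩ := hiA
        obtain ⟨-, hadjB⟩ := hiB
        have hi1 : i + 1 < l.length := by omega
        have hii : i < l.length := by omega
        rw [List.getD_eq_getElem l a hi1] at hadjA
        rw [List.getD_eq_getElem l a hii] at hadjB
        set C : List V := l.take (i+1) ++ (l.drop (i+1)).reverse with hCDef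
        have hperm : C.Perm l := by
          have h1 : ((l.drop (i+1)).reverse).Perm (l.drop (i+1)) := List.reverse_perm _
          have h2 := h1.append_left (l.take (i+1))
          rw [List.take_append_drop] at h2
          exact h2
        have hClen : C.length = l.length := hperm.length_eq
        have hCne : C ≠ [] := by
          intro h
          rw [h] at hClen
          simp at hClen
          omega
        have hdne : l.drop (i+1) ≠ [] := by
          intro h
          have := congrArg List.length h
          simp at this
          omega
        have hCch : C.Chain' G.Adj := by
          rw [hCDef, List.Chain', List.isChain_append]
          refine ⟨hlch.prefix (List.take_prefix _ _), ?_, ?_⟩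
          · rw [List.isChain_reverse]
            exact (hlch.suffix (List.drop_suffix _ _)).imp (fun x y hxy => hxy.symm)
          · intro x hx y hy
            have htake : (l.take (i+1)).getLast? = some l[i] := by
              rw [List.take_succ, List.getElem?_eq_getElem hii]
              exact List.getLast?_concat
            rw [htake] at hx
            obtain rfl : l[i] = x := Option.mem_some_iff.mp hx
            have hhead : ((l.drop (i+1)).reverse).head? = some b := by
              rw [List.head?_reverse]
              have hgl : (l.drop (i+1)).getLast? = l.getLast? := by
                conv_rhs => rw [← List.take_append_drop (i+1) l]
                rw [List.getLast?_append_of_ne_nil _ hdne]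
              rw [hgl, List.getLast?_eq_getLast hlne]
            rw [hhead] at hy
            obtain rfl : b = y := Option.mem_some_iff.mp hy
            exact hadjB.symm
        have hCclose : G.Adj (C.getLast hCne) (C.head hCne) := by
          have h1 : C.getLast? = some l[i+1] := by
            rw [hCDef, List.getLast?_append_of_ne_nil _ (by simpa using hdne)]
            rw [List.getLast?_reverse, List.head?_drop]
            exact List.getElem?_eq_getElem hi1
          have h2 : C.head? = some a := by
            rw [hCDef]
            conv_lhs => rw [← List.cons_head_tail hlne]
            rw [List.take_succ_cons, List.cons_append]
            simp
            exact haDef.symm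
          rw [List.getLast?_eq_getLast hCne] at h1
          rw [List.head?_eq_head hCne] at h2
          rw [Option.some_injective _ h1, Option.some_injective _ h2]
          exact hadjA.symm
        by_cases hout : ∃ w ∈ s, w ∉ l ∧ ∃ c ∈ C, G.Adj w c
        · exfalso
          obtain ⟨w, hws, hwl, c, hcC, hwc⟩ := hout
          obtain ⟨P, hPperm, hPch, hPhead⟩ :=
            ErdosGallaiAux.rotate_cycle hCch hCne hCclose hcC
          have hPl : P.Perm l := hPperm.trans hperm
          have hGood' : Good (w :: P) := by
            refine ⟨by simp, ?_, ?_, ?_⟩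
            · rw [List.Chain', List.isChain_cons]
              refine ⟨?_, hPch⟩
              intro y hy
              rw [hPhead] at hy
              obtain rfl : c = y := Option.mem_some_iff.mp hy
              exact hwc
            · rw [List.nodup_cons]
              exact ⟨fun hwP => hwl (hPl.mem_iff.mp hwP), hPl.nodup_iff.mpr hlnd⟩
            · intro x hx
              rcases List.mem_cons.mp hx with rfl | hxP
              · exact hws
              · exact hlsub _ (hPl.mem_iff.mp hxP)
          have hle := hmax _ hGood'
          have hlen' : (w :: P).length = l.length + 1 := by
            simp [hPl.length_eq]
          omega
        · push_neg at hout
          set Tf : Finset V := l.toFinset with hTfDef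
          have hTsub : Tf ⊆ s := fun x hx => hlsub x (List.mem_toFinset.mp hx)
          have hTcard : Tf.card = l.length := List.toFinset_card_of_nodup hlnd
          have hTne' : Tf.Nonempty := ⟨a, List.mem_toFinset.mpr (List.head_mem hlne)⟩
          have hmemC : ∀ x, x ∈ C ↔ x ∈ Tf := fun x => by
            rw [hperm.mem_iff, List.mem_toFinset]
          have hTv : ∀ u ∈ Tf, (G.neighborFinset u ∩ s).card ≤ k - 2 := by
            intro u hu
            have hsub2 : G.neighborFinset u ∩ s ⊆ Tf.erase u := by
              intro x hx
              rw [Finset.mem_inter, SimpleGraph.mem_neighborFinset] at hx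
              obtain ⟨hadj, hxs⟩ := hx
              rw [Finset.mem_erase]
              refine ⟨fun h => G.ne_of_adj hadj h.symm, ?_⟩
              by_contra hxT
              exact hout x hxs (fun hxl => hxT (List.mem_toFinset.mpr hxl)) u
                ((hmemC u).mpr hu) hadj.symm
            calc (G.neighborFinset u ∩ s).card ≤ (Tf.erase u).card :=
                  Finset.card_le_card hsub2
              _ = Tf.card - 1 := Finset.card_erase_of_mem hu
              _ = l.length - 1 := by rw [hTcard]
              _ ≤ k - 2 := by omega
          have hsumT : ∑ u ∈ Tf, (G.neighborFinset u ∩ s).card ≤ Tf.card * (k - 2) := by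
            calc ∑ u ∈ Tf, (G.neighborFinset u ∩ s).card ≤ ∑ _u ∈ Tf, (k - 2) :=
                  Finset.sum_le_sum hTv
              _ = Tf.card * (k - 2) := by rw [Finset.sum_const, smul_eq_mul]
          set R : Finset V := s \ Tf with hRDef
          have hReq : ∀ u ∈ R, G.neighborFinset u ∩ s = G.neighborFinset u ∩ R := by
            intro u hu
            rw [hRDef] at hu ⊢
            obtain ⟨hus, huT⟩ := Finset.mem_sdiff.mp hu
            ext x
            simp only [Finset.mem_inter, SimpleGraph.mem_neighborFinset, Finset.mem_sdiff]
            constructor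
            · rintro ⟨hadj, hxs⟩
              refine ⟨hadj, hxs, fun hxT => ?_⟩
              exact hout u hus (fun hul => huT (List.mem_toFinset.mpr hul)) x
                ((hmemC x).mpr hxT) hadj
            · rintro ⟨hadj, hxs, -⟩
              exact ⟨hadj, hxs⟩
          have hsplit2 : ∑ u ∈ R, (G.neighborFinset u ∩ s).card
              + ∑ u ∈ Tf, (G.neighborFinset u ∩ s).card
              = ∑ u ∈ s, (G.neighborFinset u ∩ s).card := Finset.sum_sdiff hTsub
          have hcards : R.card + Tf.card = s.card := by
            rw [hRDef]
            exact Finset.card_sdiff_add_card_eq_card hTsub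
          have hs2 : s.card * (k - 2) = R.card * (k - 2) + Tf.card * (k - 2) := by
            rw [← hcards, add_mul]
          have hRsum : R.card * (k - 2) < ∑ u ∈ R, (G.neighborFinset u ∩ R).card := by
            have hrw : ∑ u ∈ R, (G.neighborFinset u ∩ R).card
                = ∑ u ∈ R, (G.neighborFinset u ∩ s).card :=
              Finset.sum_congr rfl (fun u hu => by rw [hReq u hu])
            rw [hrw]
            exact arith2 _ _ _ _ _ _ hs2 hsplit2 hsumT hsum
          exact IH R (Finset.sdiff_ssubset hTsub hTne') hRsum

end ErdosGallaiAux

/-- Erdős–Gallai type fact: if a simple undirected graph `G` on `n` vertices has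
more than `n(k-2)/2` edges (`k ≥ 2`), then `G` contains a path on `k` vertices. -/
theorem stmt_8 (n k : ℕ) (hk : 2 ≤ k) (G : SimpleGraph (Fin n)) [DecidableRel G.Adj]
    (h : n * (k - 2) < 2 * G.edgeFinset.card) :
    ∃ (a b : Fin n) (p : G.Walk a b), p.IsPath ∧ p.length + 1 = k := by
  classical
  have hsum : (Finset.univ : Finset (Fin n)).card * (k - 2)
      < ∑ v ∈ (Finset.univ : Finset (Fin n)), (G.neighborFinset v ∩ Finset.univ).card := by
    simp only [Finset.inter_univ, Finset.card_univ, Fintype.card_fin]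
    have hd : ∑ v : Fin n, (G.neighborFinset v).card = 2 * G.edgeFinset.card := by
      rw [← SimpleGraph.sum_degrees_eq_twice_card_edges]
      rfl
    rw [hd]
    exact h
  obtain ⟨l, hch, hnd, hlen⟩ := ErdosGallaiAux.main_lemma hk G Finset.univ hsum
  have hlne : l ≠ [] := by
    intro hnil
    rw [hnil] at hlen
    simp at hlen
    omega
  obtain ⟨x, y, p, hp⟩ := ErdosGallaiAux.exists_walk_of_list G l hch hlne
  refine ⟨x, y, p, ?_, ?_⟩
  · rw [SimpleGraph.Walk.isPath_def, hp]
    exact hnd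
  · rw [← SimpleGraph.Walk.length_support, hp, hlen]
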